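/- If a binary assignment x : Fin h × Fin w × T → {0,1} is feasible for the maximum-cover constraints (at most one tile per cell, and for each color ℓ the horizontal constraints ∑_{k, e(k)=ℓ} x(i,j,k) + ∑_{k, w(k)≠ℓ} x(i,j+1,k) ≤ 1 and vertical constraints ∑_{k, s(k)=ℓ} x(i,j,k) + ∑_{k, n(k)≠ℓ} x(i+1,j,k) ≤ 1) and its objective value ∑_{i,j,k} x(i,j,k) equals h·w, then every cell holds exactly one tile and the induced complete tiling τ : Fin h × Fin w → T is a valid tiling. -/
import Mathlib


/-- a feasible solution of the maximum-cover program (16) whose objective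
value equals h·w has exactly one tile at every cell and induces a valid complete tiling. -/
theorem stmt_2 {C T : Type} [Fintype T] [DecidableEq C]
    {h w : ℕ} (tn tw ts te : T → C)
    (x : Fin h → Fin w → T → ℕ)
    (hx : ∀ i j k, x i j k = 0 ∨ x i j k = 1)
    (h1 : ∀ i j, (∑ k : T, x i j k) ≤ 1)
    (h2 : ∀ (i : Fin h) (j : Fin w) (hj : j.val + 1 < w) (ℓ : C),
      (∑ k : T, if te k = ℓ then x i j k else 0) +
        (∑ k : T, if tw k ≠ ℓ then x i ⟨j.val + 1, hj⟩ k else 0) ≤ 1)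
    (h3 : ∀ (i : Fin h) (j : Fin w) (hi : i.val + 1 < h) (ℓ : C),
      (∑ k : T, if ts k = ℓ then x i j k else 0) +
        (∑ k : T, if tn k ≠ ℓ then x ⟨i.val + 1, hi⟩ j k else 0) ≤ 1)
    (hobj : (∑ i : Fin h, ∑ j : Fin w, ∑ k : T, x i j k) = h * w) :
    (∀ i j, (∑ k : T, x i j k) = 1) ∧
    ∃ τ : Fin h → Fin w → T,
      (∀ i j k, x i j k = 1 ↔ τ i j = k) ∧
      (∀ (i : Fin h) (j : Fin w) (hi : i.val + 1 < h),
        ts (τ i j) = tn (τ ⟨i.val + 1, hi⟩ j)) ∧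
      (∀ (i : Fin h) (j : Fin w) (hj : j.val + 1 < w),
        te (τ i j) = tw (τ i ⟨j.val + 1, hj⟩)) := by
  -- every cell holds exactly one tile
  have hrow : ∀ i : Fin h, (∑ j : Fin w, ∑ k : T, x i j k) = w := by
    have hle : ∀ i ∈ (Finset.univ : Finset (Fin h)),
        (∑ j : Fin w, ∑ k : T, x i j k) ≤ (fun _ => w) i := by
      intro i _
      calc (∑ j : Fin w, ∑ k : T, x i j k) ≤ ∑ _j : Fin w, 1 :=
            Finset.sum_le_sum (fun j _ => h1 i j)
        _ = w := by simp
    have := (Finset.sum_eq_sum_iff_of_le hle).mpr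
    have heq : (∑ i : Fin h, ∑ j : Fin w, ∑ k : T, x i j k)
        = ∑ _i : Fin h, w := by simpa [mul_comm] using hobj
    intro i
    exact (Finset.sum_eq_sum_iff_of_le hle).mp heq i (Finset.mem_univ i)
  have hcell : ∀ i j, (∑ k : T, x i j k) = 1 := by
    intro i j
    have hle : ∀ j ∈ (Finset.univ : Finset (Fin w)),
        (∑ k : T, x i j k) ≤ (fun _ => 1) j := fun j _ => h1 i j
    have heq : (∑ j : Fin w, ∑ k : T, x i j k) = ∑ _j : Fin w, 1 := by
      simpa using hrow i
    exact (Finset.sum_eq_sum_iff_of_le hle).mp heq j (Finset.mem_univ j)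
  have hexu : ∀ i j, ∃! k : T, x i j k = 1 := by
    intro i j
    obtain ⟨k, hk⟩ : ∃ k, x i j k = 1 := by
      by_contra hno
      push_neg at hno
      have hz : ∀ k, x i j k = 0 := fun k => (hx i j k).resolve_right (hno k)
      have := hcell i j
      simp [hz] at this
    refine ⟨k, hk, fun k' hk' => ?_⟩
    by_contra hne
    have h2le : x i j k' + x i j k ≤ ∑ k, x i j k :=
      Finset.add_le_sum (f := fun k => x i j k) (by intro a _; omega)
        (Finset.mem_univ k') (Finset.mem_univ k) hne
    rw [hk, hk', hcell i j] at h2le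
    omega
  choose τ hτ hτu using hexu
  have hiff : ∀ i j k, x i j k = 1 ↔ τ i j = k := by
    intro i j k
    constructor
    · intro hk; exact (hτu i j k hk).symm
    · rintro rfl; exact hτ i j
  -- key lemma about the two sums
  have single : ∀ (i : Fin h) (j : Fin w) (f : T → C) (ℓ : C), f (τ i j) = ℓ →
      1 ≤ ∑ k : T, if f k = ℓ then x i j k else 0 := by
    intro i j f ℓ hℓ
    have : (if f (τ i j) = ℓ then x i j (τ i j) else 0) = 1 := by
      rw [if_pos hℓ, hτ i j]
    calc 1 = (if f (τ i j) = ℓ then x i j (τ i j) else 0) := this.symm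
      _ ≤ _ := Finset.single_le_sum (f := fun k => if f k = ℓ then x i j k else 0)
          (by intro a _; omega) (Finset.mem_univ _)
  refine ⟨hcell, τ, hiff, ?_, ?_⟩
  · intro i j hi
    set ℓ := ts (τ i j)
    have hA := single i j ts ℓ rfl
    have hB := h3 i j hi ℓ
    by_contra hne
    have hne' : tn (τ ⟨i.val + 1, hi⟩ j) ≠ ℓ := fun hc => hne hc.symm
    have : (if tn (τ ⟨i.val + 1, hi⟩ j) ≠ ℓ then x ⟨i.val + 1, hi⟩ j (τ ⟨i.val + 1, hi⟩ j) else 0) = 1 := by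
      rw [if_pos hne', hτ]
    have h1le : 1 ≤ ∑ k : T, if tn k ≠ ℓ then x ⟨i.val + 1, hi⟩ j k else 0 := by
      calc 1 = _ := this.symm
        _ ≤ _ := Finset.single_le_sum
            (f := fun k => if tn k ≠ ℓ then x ⟨i.val + 1, hi⟩ j k else 0)
            (by intro a _; positivity) (Finset.mem_univ _)
    omega
  · intro i j hj
    set ℓ := te (τ i j)
    have hA := single i j te ℓ rfl
    have hB := h2 i j hj ℓ
    by_contra hne
    have hne' : tw (τ i ⟨j.val + 1, hj⟩) ≠ ℓ := fun hc => hne hc.symm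
    have : (if tw (τ i ⟨j.val + 1, hj⟩) ≠ ℓ then x i ⟨j.val + 1, hj⟩ (τ i ⟨j.val + 1, hj⟩) else 0) = 1 := by
      rw [if_pos hne', hτ]
    have h1le : 1 ≤ ∑ k : T, if tw k ≠ ℓ then x i ⟨j.val + 1, hj⟩ k else 0 := by
      calc 1 = _ := this.symm
        _ ≤ _ := Finset.single_le_sum
            (f := fun k => if tw k ≠ ℓ then x i ⟨j.val + 1, hj⟩ k else 0)
            (by intro a _; positivity) (Finset.mem_univ _)
    omega
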